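/- Fix α ∈ (0,1] and let X := {(x,y) ∈ ℝ² : x ≥ 0 and |y| ≤ x^α}, endowed with the Euclidean metric of ℝ². Then d∞(X) = α + 1. -/

import Mathlib

open Metric Filter Topology Set

/-- Logarithm of an extended natural number, valued in `EReal` (`⊤` for `⊤`). -/
noncomputable def elog (n : ℕ∞) : EReal :=
  if n = ⊤ then ⊤ else ((Real.log (n.toNat : ℝ) : ℝ) : EReal)

/-- `coverNum r Ω` : the least number of open balls of radius `r` needed to cover `Ω`,
valued in `ℕ∞` (it is `⊤` if no finite cover exists). -/
noncomputable def coverNum {X : Type*} [MetricSpace X] (r : ℝ) (Ω : Set X) : ℕ∞ :=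
  sInf ((fun s : Finset X => (s.card : ℕ∞)) ''
    {s : Finset X | Ω ⊆ ⋃ x ∈ s, Metric.ball x r})

/-- The asymptotic dimension with base point `x`:
`d∞(X) = lim_{r→∞} limsup_{R→∞} log n_r(B(x,R)) / log R`; the limit in `r` exists since the
inner expression is nonincreasing in `r`, hence equals the infimum over `r > 0`. -/
noncomputable def asympDim {X : Type*} [MetricSpace X] (x : X) : EReal :=
  ⨅ (r : ℝ) (_ : 0 < r),
    Filter.limsup (fun R : ℝ => ((Real.log R)⁻¹ : EReal) * elog (coverNum r (Metric.ball x R)))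
      Filter.atTop

/-- The asymptotic dimension of a metric space (independent of the base point). -/
noncomputable def asympDimSpace (X : Type*) [MetricSpace X] : EReal :=
  ⨆ x : X, asympDim x

namespace Stmt18

lemma sqrt_le_abs_add (a b : ℝ) : Real.sqrt (a^2 + b^2) ≤ |a| + |b| := by
  calc Real.sqrt (a^2+b^2) ≤ Real.sqrt ((|a|+|b|)^2) := by
        apply Real.sqrt_le_sqrt
        nlinarith [abs_nonneg a, abs_nonneg b, sq_abs a, sq_abs b]
    _ = |a| + |b| := Real.sqrt_sq (by positivity)

lemma dist_eq2 (p q : EuclideanSpace ℝ (Fin 2)) :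
    dist p q = Real.sqrt ((p 0 - q 0)^2 + (p 1 - q 1)^2) := by
  rw [EuclideanSpace.dist_eq, Fin.sum_univ_two, Real.dist_eq, Real.dist_eq, sq_abs, sq_abs]

lemma one_le_sub_sq {m n : ℕ} (h : m ≠ n) : 1 ≤ ((m:ℝ) - n)^2 := by
  have h2 : (1:ℤ) ≤ |(m:ℤ) - n| := Int.one_le_abs (by omega)
  have h3 : (1:ℝ) ≤ |(m:ℝ) - n| := by
    have : ((|(m:ℤ) - n| : ℤ) : ℝ) = |(m:ℝ) - n| := by rw [Int.cast_abs]; push_cast; ring_nf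
    rw [← this]; exact_mod_cast h2
  calc (1:ℝ) = 1^2 := by norm_num
    _ ≤ |(m:ℝ) - n|^2 := by nlinarith
    _ = ((m:ℝ)-n)^2 := sq_abs _

def pt (a b : ℝ) : EuclideanSpace ℝ (Fin 2) := WithLp.toLp 2 ![a, b]

@[simp] lemma pt_zero (a b : ℝ) : pt a b 0 = a := rfl
@[simp] lemma pt_one (a b : ℝ) : pt a b 1 = b := rfl

lemma coverNum_le_card {Y : Type*} [MetricSpace Y] {r : ℝ} {Ω : Set Y} {s : Finset Y}
    (h : Ω ⊆ ⋃ x ∈ s, ball x r) : coverNum r Ω ≤ s.card :=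
  sInf_le ⟨s, h, rfl⟩

lemma le_coverNum {Y : Type*} [MetricSpace Y] {r : ℝ} {Ω : Set Y} {m : ℕ}
    (h : ∀ s : Finset Y, Ω ⊆ ⋃ x ∈ s, ball x r → m ≤ s.card) : (m:ℕ∞) ≤ coverNum r Ω :=
  le_sInf (by rintro _ ⟨s, hs, rfl⟩; simp only []; exact_mod_cast h s hs)

lemma elog_ne_top {n : ℕ∞} (h : n ≠ ⊤) : elog n = ((Real.log (n.toNat : ℝ) : ℝ) : EReal) := by
  rw [elog, if_neg h]

lemma log_nat_le {m : ℕ} {y : ℝ} (h : (m:ℝ) ≤ y) (hy : 1 ≤ y) :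
    Real.log m ≤ Real.log y := by
  rcases Nat.eq_zero_or_pos m with hm | hm
  · simp [hm]; exact Real.log_nonneg hy
  · exact Real.log_le_log (by exact_mod_cast hm) h

end Stmt18

section Cover
open Stmt18

variable {α : ℝ}

/-- The region. -/
def Stmt18.S (α : ℝ) : Set (EuclideanSpace ℝ (Fin 2)) := {p | 0 ≤ p 0 ∧ |p 1| ≤ (p 0) ^ α}

namespace Stmt18

set_option maxHeartbeats 1000000 in
lemma cover_le (hα₀ : 0 < α) (x₀ : ↥(S α)) {r : ℝ} (hr : 0 < r) {R : ℝ} (hR : 0 < R) :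
    coverNum r (ball x₀ R) ≤
      (((⌈(((x₀ : EuclideanSpace ℝ (Fin 2)) 0 + R)/(r/4))⌉₊ + 1) *
        (2 * ⌈(((x₀ : EuclideanSpace ℝ (Fin 2)) 0 + R)^α/(r/4))⌉₊ + 1) : ℕ) : ℕ∞) := by
  classical
  set δ : ℝ := r/4 with hδdef
  have hδ : 0 < δ := by positivity
  set b : ℝ := (x₀ : EuclideanSpace ℝ (Fin 2)) 0 with hbdef
  have hb : 0 ≤ b := x₀.2.1
  set I : ℕ := ⌈(b + R)/δ⌉₊ with hIdef
  set K : ℕ := ⌈(b + R)^α/δ⌉₊ with hKdef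
  set f : ℕ × ℤ → ↥(S α) := fun ik =>
    if h : pt (ik.1 * δ) (ik.2 * δ) ∈ S α then ⟨_, h⟩ else x₀ with hfdef
  set s : Finset ↥(S α) :=
    ((Finset.range (I+1)) ×ˢ (Finset.Icc (-(K:ℤ)) (K:ℤ))).image f with hsdef
  have hcov : ball x₀ R ⊆ ⋃ c ∈ s, ball c r := by
    intro p hp
    set x : ℝ := (p : EuclideanSpace ℝ (Fin 2)) 0 with hxdef
    set y : ℝ := (p : EuclideanSpace ℝ (Fin 2)) 1 with hydef
    have hx0 : 0 ≤ x := p.2.1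
    have hyx : |y| ≤ x ^ α := p.2.2
    have hdist : dist (p : EuclideanSpace ℝ (Fin 2)) (x₀ : EuclideanSpace ℝ (Fin 2)) < R := by
      rw [← Subtype.dist_eq]; exact mem_ball.mp hp
    have hxb : x ≤ b + R := by
      have h1 : |x - b| ≤ dist (p : EuclideanSpace ℝ (Fin 2)) (x₀ : EuclideanSpace ℝ (Fin 2)) := by
        rw [dist_eq2]
        calc |x - b| = Real.sqrt ((x-b)^2) := (Real.sqrt_sq_eq_abs _).symm
          _ ≤ _ := Real.sqrt_le_sqrt (by nlinarith [sq_nonneg ((p : EuclideanSpace ℝ (Fin 2)) 1 - (x₀ : EuclideanSpace ℝ (Fin 2)) 1)])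
      have := abs_le.mp (h1.trans hdist.le)
      linarith [this.1, this.2]
    set i : ℕ := ⌈x/δ⌉₊ with hidef
    have hiδ : x ≤ i * δ := by
      have h1 : x/δ ≤ (i:ℝ) := Nat.le_ceil _
      calc x = (x/δ) * δ := by field_simp
        _ ≤ (i:ℝ) * δ := by nlinarith
    have hiδ' : (i:ℝ) * δ < x + δ := by
      have h1 : (i:ℝ) < x/δ + 1 := Nat.ceil_lt_add_one (by positivity)
      calc (i:ℝ) * δ < (x/δ + 1) * δ := by nlinarith
        _ = x + δ := by field_simp
    have hiI : i ≤ I := Nat.ceil_le_ceil (by gcongr)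
    set k : ℤ := if 0 ≤ y then ⌊y/δ⌋ else -⌊(-y)/δ⌋ with hkdef
    have hk1 : |(k:ℝ) * δ| ≤ |y| ∧ |y - k * δ| ≤ δ := by
      rcases le_or_gt 0 y with hy0 | hy0
      · have hk : k = ⌊y/δ⌋ := if_pos hy0
        have hf0 : (0:ℤ) ≤ ⌊y/δ⌋ := Int.floor_nonneg.mpr (by positivity)
        have h1 : (k:ℝ) * δ ≤ y := by
          rw [hk]
          have h2 : ((⌊y/δ⌋:ℝ)) ≤ y/δ := Int.floor_le _
          calc ((⌊y/δ⌋:ℝ)) * δ ≤ (y/δ) * δ := by nlinarith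
            _ = y := by field_simp
        have h2 : y < (k:ℝ) * δ + δ := by
          rw [hk]
          have h3 := Int.lt_floor_add_one (y/δ)
          calc y = (y/δ) * δ := by field_simp
            _ < ((⌊y/δ⌋:ℝ) + 1) * δ := by nlinarith
            _ = (⌊y/δ⌋:ℝ) * δ + δ := by ring
        have hknn : 0 ≤ (k:ℝ) * δ := by
          have h4 : (0:ℝ) ≤ (k:ℝ) := by rw [hk]; exact_mod_cast hf0
          positivity
        constructor
        · rw [abs_of_nonneg hknn, abs_of_nonneg hy0]; exact h1
        · rw [abs_of_nonneg (by linarith)]; linarith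
      · have hk : k = -⌊(-y)/δ⌋ := if_neg (not_le.mpr hy0)
        have hynn : (0:ℝ) ≤ (-y)/δ := div_nonneg (by linarith) hδ.le
        have hf0 : (0:ℤ) ≤ ⌊(-y)/δ⌋ := Int.floor_nonneg.mpr hynn
        have h1 : (⌊(-y)/δ⌋:ℝ) * δ ≤ -y := by
          have h2 : ((⌊(-y)/δ⌋:ℝ)) ≤ (-y)/δ := Int.floor_le _
          calc ((⌊(-y)/δ⌋:ℝ)) * δ ≤ ((-y)/δ) * δ := by nlinarith
            _ = -y := by field_simp
        have h2 : -y < (⌊(-y)/δ⌋:ℝ) * δ + δ := by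
          have h3 := Int.lt_floor_add_one ((-y)/δ)
          calc -y = ((-y)/δ) * δ := by field_simp
            _ < ((⌊(-y)/δ⌋:ℝ) + 1) * δ := by nlinarith
            _ = (⌊(-y)/δ⌋:ℝ) * δ + δ := by ring
        have hke : (k:ℝ) * δ = -((⌊(-y)/δ⌋:ℝ) * δ) := by rw [hk]; push_cast; ring
        have hknn : (0:ℝ) ≤ (⌊(-y)/δ⌋:ℝ) * δ := by
          have h4 : (0:ℝ) ≤ (⌊(-y)/δ⌋:ℝ) := by exact_mod_cast hf0
          positivity
        constructor
        · rw [hke, abs_neg, abs_of_nonneg hknn, abs_of_neg hy0]; exact h1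
        · rw [hke, abs_of_nonpos (by linarith)]; linarith
    have hkK : k ∈ Finset.Icc (-(K:ℤ)) (K:ℤ) := by
      have h1 : |(k:ℝ)| * δ ≤ (b+R)^α := by
        have h0 : |(k:ℝ) * δ| ≤ (b+R)^α :=
          hk1.1.trans (hyx.trans (Real.rpow_le_rpow hx0 hxb hα₀.le))
        rwa [abs_mul, abs_of_pos hδ] at h0
      have h2 : |(k:ℝ)| ≤ (b+R)^α/δ := by rw [le_div_iff₀ hδ]; exact h1
      have h3 : |(k:ℝ)| ≤ (K:ℝ) := h2.trans (Nat.le_ceil _)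
      have h4 : |k| ≤ (K:ℤ) := by exact_mod_cast (by rwa [← Int.cast_abs] at h3 : ((|k|:ℤ):ℝ) ≤ (K:ℝ))
      have h5 := abs_le.mp h4
      exact Finset.mem_Icc.mpr h5
    have hcS : pt ((i:ℝ) * δ) ((k:ℝ) * δ) ∈ S α := by
      constructor
      · simp only [pt_zero]; positivity
      · simp only [pt_zero, pt_one]
        calc |(k:ℝ) * δ| ≤ |y| := hk1.1
          _ ≤ x ^ α := hyx
          _ ≤ ((i:ℝ) * δ) ^ α := Real.rpow_le_rpow hx0 hiδ hα₀.le
    have hmem : f (i, k) ∈ s := by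
      rw [hsdef]
      exact Finset.mem_image.mpr ⟨(i, k),
        Finset.mem_product.mpr ⟨Finset.mem_range.mpr (by omega), hkK⟩, rfl⟩
    refine mem_iUnion₂.mpr ⟨f (i, k), hmem, ?_⟩
    rw [mem_ball, Subtype.dist_eq]
    have hfe : ((f (i,k)) : EuclideanSpace ℝ (Fin 2)) = pt ((i:ℝ) * δ) ((k:ℝ) * δ) := by
      rw [hfdef]; simp only [dif_pos hcS]
    rw [hfe, dist_eq2]
    have e0 : (p : EuclideanSpace ℝ (Fin 2)) 0 - (pt ((i:ℝ)*δ) ((k:ℝ)*δ)) 0 = x - i*δ := by simp [hxdef]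
    have e1 : (p : EuclideanSpace ℝ (Fin 2)) 1 - (pt ((i:ℝ)*δ) ((k:ℝ)*δ)) 1 = y - k*δ := by simp [hydef]
    rw [e0, e1]
    calc Real.sqrt ((x - i*δ)^2 + (y - k*δ)^2) ≤ |x - i*δ| + |y - k*δ| := sqrt_le_abs_add _ _
      _ ≤ δ + δ := by
          have h6 : |x - i*δ| ≤ δ := abs_le.mpr ⟨by linarith, by linarith⟩
          linarith [hk1.2, h6]
      _ < r := by rw [hδdef]; linarith
  calc coverNum r (ball x₀ R) ≤ (s.card : ℕ∞) := coverNum_le_card hcov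
    _ ≤ _ := by
        have h1 : s.card ≤ (I+1) * (2*K+1) := by
          rw [hsdef]
          calc (((Finset.range (I+1)) ×ˢ (Finset.Icc (-(K:ℤ)) (K:ℤ))).image f).card
              ≤ ((Finset.range (I+1)) ×ˢ (Finset.Icc (-(K:ℤ)) (K:ℤ))).card :=
              Finset.card_image_le
            _ = (I+1) * (2*K+1) := by
                have hicc : (Finset.Icc (-(K:ℤ)) (K:ℤ)).card = 2*K+1 := by
                  rw [Int.card_Icc]; omega
                rw [Finset.card_product, Finset.card_range, hicc]
        exact_mod_cast h1

end Stmt18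
end Cover

namespace Stmt18

set_option maxHeartbeats 1000000 in
lemma le_cover (hα₀ : 0 < α) (hα₁ : α ≤ 1) (x₀ : ↥(S α)) {r : ℝ} (hr : 0 < r) {R : ℝ}
    (hR4 : 4 ≤ R)
    (hRb : 4 * (|(x₀ : EuclideanSpace ℝ (Fin 2)) 0| + |(x₀ : EuclideanSpace ℝ (Fin 2)) 1| + 1) ≤ R) :
    ((⌊R/(8*r)⌋₊ * (⌊(R/4)^α/(2*r)⌋₊ + 1) : ℕ) : ℕ∞) ≤ coverNum r (ball x₀ R) := by
  classical
  set b₀ : ℝ := (x₀ : EuclideanSpace ℝ (Fin 2)) 0 with hb₀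
  set b₁ : ℝ := (x₀ : EuclideanSpace ℝ (Fin 2)) 1 with hb₁
  set I : ℕ := ⌊R/(8*r)⌋₊ with hI
  set J : ℕ := ⌊(R/4)^α/(2*r)⌋₊ with hJ
  have hR0 : 0 < R := by linarith
  set q : ℕ × ℕ → EuclideanSpace ℝ (Fin 2) :=
    fun ij => pt (R/4 + 2*r*ij.1) (2*r*ij.2) with hq
  set idx : Finset (ℕ × ℕ) := Finset.range I ×ˢ Finset.range (J+1) with hidx
  -- basic bounds for indices in idx
  have hxle : ∀ i < I, R/4 + 2*r*(i:ℝ) ≤ R/2 := by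
    intro i hi
    have h1 : (i:ℝ) ≤ (I:ℝ) - 1 := by
      have : (i:ℝ) + 1 ≤ (I:ℝ) := by exact_mod_cast hi
      linarith
    have h2 : (I:ℝ) ≤ R/(8*r) := Nat.floor_le (by positivity)
    have : 2*r*(i:ℝ) ≤ 2*r*(R/(8*r) - 1) := by nlinarith
    have h3 : 2*r*(R/(8*r)) = R/4 := by field_simp; ring
    nlinarith
  have hyle : ∀ j < J+1, 2*r*(j:ℝ) ≤ (R/4)^α := by
    intro j hj
    have h1 : (j:ℝ) ≤ (J:ℝ) := by exact_mod_cast Nat.lt_succ_iff.mp hj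
    have h2 : (J:ℝ) ≤ (R/4)^α/(2*r) := Nat.floor_le (by positivity)
    have h3 : 2*r*(j:ℝ) ≤ 2*r*((R/4)^α/(2*r)) := by nlinarith
    calc 2*r*(j:ℝ) ≤ 2*r*((R/4)^α/(2*r)) := h3
      _ = (R/4)^α := by field_simp
  have hr4 : (R/4)^α ≤ R/4 := by
    nth_rewrite 2 [show R/4 = (R/4)^(1:ℝ) by rw [Real.rpow_one]]
    exact Real.rpow_le_rpow_of_exponent_le (by linarith) hα₁
  have hqS : ∀ ij ∈ idx, q ij ∈ S α := by
    rintro ⟨i, j⟩ hij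
    rw [hidx, Finset.mem_product, Finset.mem_range, Finset.mem_range] at hij
    constructor
    · simp only [hq, pt_zero]; positivity
    · simp only [hq, pt_zero, pt_one]
      rw [abs_of_nonneg (by positivity)]
      calc 2*r*(j:ℝ) ≤ (R/4)^α := hyle j hij.2
        _ ≤ (R/4 + 2*r*(i:ℝ))^α :=
            Real.rpow_le_rpow (by positivity) (le_add_of_nonneg_right (by positivity)) hα₀.le
  have hqB : ∀ ij ∈ idx, dist (q ij) (x₀ : EuclideanSpace ℝ (Fin 2)) < R := by
    rintro ⟨i, j⟩ hij
    rw [hidx, Finset.mem_product, Finset.mem_range, Finset.mem_range] at hij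
    rw [dist_eq2]
    simp only [hq, pt_zero, pt_one]
    have hX1 : (0:ℝ) ≤ R/4 + 2*r*(i:ℝ) := by positivity
    have hX2 : R/4 + 2*r*(i:ℝ) ≤ R/2 := hxle i hij.1
    have hY1 : (0:ℝ) ≤ 2*r*(j:ℝ) := by positivity
    have hY2 : 2*r*(j:ℝ) ≤ R/4 := (hyle j hij.2).trans hr4
    calc Real.sqrt ((R/4 + 2*r*(i:ℝ) - b₀)^2 + (2*r*(j:ℝ) - b₁)^2)
        ≤ |R/4 + 2*r*(i:ℝ) - b₀| + |2*r*(j:ℝ) - b₁| := sqrt_le_abs_add _ _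
      _ ≤ (|R/4 + 2*r*(i:ℝ)| + |b₀|) + (|2*r*(j:ℝ)| + |b₁|) := by
          gcongr <;> exact abs_sub _ _
      _ = (R/4 + 2*r*(i:ℝ)) + |b₀| + (2*r*(j:ℝ)) + |b₁| := by
          rw [abs_of_nonneg hX1, abs_of_nonneg hY1]; ring
      _ < R := by linarith [hX2, hY2, hRb]
  have hsep : ∀ a ∈ idx, ∀ c ∈ idx, a ≠ c → 2*r ≤ dist (q a) (q c) := by
    rintro ⟨i, j⟩ _ ⟨i', j'⟩ _ hne
    rw [dist_eq2]
    simp only [hq, pt_zero, pt_one]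
    have key : (2*r)^2 ≤ (R/4 + 2*r*(i:ℝ) - (R/4 + 2*r*(i':ℝ)))^2 + (2*r*(j:ℝ) - 2*r*(j':ℝ))^2 := by
      have e1 : (R/4 + 2*r*(i:ℝ) - (R/4 + 2*r*(i':ℝ)))^2 = (2*r)^2 * ((i:ℝ) - i')^2 := by ring
      have e2 : (2*r*(j:ℝ) - 2*r*(j':ℝ))^2 = (2*r)^2 * ((j:ℝ) - j')^2 := by ring
      rw [e1, e2]
      by_cases hii : i = i'
      · have hjj : j ≠ j' := by
          intro h'; exact hne (by simp [Prod.ext_iff, hii, h'])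
        have := one_le_sub_sq hjj
        nlinarith [sq_nonneg ((i:ℝ) - i'), sq_nonneg (2*r)]
      · have := one_le_sub_sq hii
        nlinarith [sq_nonneg ((j:ℝ) - j'), sq_nonneg (2*r)]
    calc 2*r = Real.sqrt ((2*r)^2) := (Real.sqrt_sq (by positivity)).symm
      _ ≤ _ := Real.sqrt_le_sqrt key
  -- now the covering argument
  apply le_coverNum
  intro t ht
  set Q : ℕ × ℕ → ↥(S α) := fun ij => if h : q ij ∈ S α then ⟨q ij, h⟩ else x₀ with hQ
  have hQe : ∀ ij ∈ idx, (Q ij : EuclideanSpace ℝ (Fin 2)) = q ij := by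
    intro ij hij; rw [hQ]; simp only [dif_pos (hqS ij hij)]
  have hQball : ∀ ij ∈ idx, Q ij ∈ ball x₀ R := by
    intro ij hij
    rw [mem_ball, Subtype.dist_eq, hQe ij hij]
    exact hqB ij hij
  have hex : ∀ ij ∈ idx, ∃ c ∈ t, Q ij ∈ ball c r := by
    intro ij hij
    obtain ⟨c, hc, h⟩ := mem_iUnion₂.mp (ht (hQball ij hij))
    exact ⟨c, hc, h⟩
  set ψ : ℕ × ℕ → ↥(S α) := fun ij =>
    if h : ∃ c ∈ t, Q ij ∈ ball c r then h.choose else x₀ with hψ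
  have hψt : ∀ ij ∈ idx, ψ ij ∈ t ∧ Q ij ∈ ball (ψ ij) r := by
    intro ij hij
    have h := hex ij hij
    rw [hψ]; simp only [dif_pos h]
    exact ⟨h.choose_spec.1, h.choose_spec.2⟩
  have hinj : Set.InjOn ψ idx := by
    rintro a ha c hc hac
    by_contra hne
    have h1 := (hψt a ha).2
    have h2 := (hψt c hc).2
    rw [hac] at h1
    have h3 : dist (Q a) (Q c) < 2*r := by
      calc dist (Q a) (Q c) ≤ dist (Q a) (ψ c) + dist (ψ c) (Q c) := dist_triangle _ _ _
        _ < r + r := by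
            rw [dist_comm (ψ c)]
            exact add_lt_add (mem_ball.mp h1) (mem_ball.mp h2)
        _ = 2*r := by ring
    have h4 : 2*r ≤ dist (Q a) (Q c) := by
      rw [Subtype.dist_eq, hQe a ha, hQe c hc]
      exact hsep a ha c hc hne
    linarith
  have hcard : idx.card ≤ t.card := Finset.card_le_card_of_injOn ψ (fun ij hij => (hψt ij hij).1) hinj
  have : idx.card = I * (J+1) := by
    rw [hidx, Finset.card_product, Finset.card_range, Finset.card_range]
  omega

end Stmt18

namespace Stmt18

set_option maxHeartbeats 1000000 in
lemma limsup_main (hα₀ : 0 < α) (hα₁ : α ≤ 1) (x₀ : ↥(S α)) {r : ℝ} (hr : 0 < r) :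
    Filter.limsup
      (fun R : ℝ => ((Real.log R)⁻¹ : EReal) * elog (coverNum r (Metric.ball x₀ R)))
      Filter.atTop = ((α + 1 : ℝ) : EReal) := by
  have hb : 0 ≤ (x₀ : EuclideanSpace ℝ (Fin 2)) 0 := x₀.2.1
  set b₀ : ℝ := (x₀ : EuclideanSpace ℝ (Fin 2)) 0 with hb₀
  set b₁ : ℝ := (x₀ : EuclideanSpace ℝ (Fin 2)) 1 with hb₁
  set n : ℝ → ℕ∞ := fun R => coverNum r (Metric.ball x₀ R) with hn
  set N : ℝ → ℕ := fun R => (⌈(b₀+R)/(r/4)⌉₊+1) * (2*⌈(b₀+R)^α/(r/4)⌉₊+1) with hN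
  set P : ℝ → ℕ := fun R => ⌊R/(8*r)⌋₊ * (⌊(R/4)^α/(2*r)⌋₊+1) with hP
  set C : ℝ := (2/(r/4)+2)*(4/(r/4)+3) with hC
  have hrq : 0 < r/4 := by positivity
  have hC1 : 1 ≤ C := by
    have h1 : 0 < 2/(r/4) := by positivity
    have h2 : 0 < 4/(r/4) := by positivity
    nlinarith
  have hC0 : 0 < C := by linarith
  set c : ℝ := (32*r^2*(4:ℝ)^(α:ℝ))⁻¹ with hc
  have h4α : (0:ℝ) < (4:ℝ)^(α:ℝ) := Real.rpow_pos_of_pos (by norm_num) _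
  have hc0 : 0 < c := by positivity
  have hnN : ∀ᶠ R in Filter.atTop, n R ≤ (N R : ℕ∞) := by
    filter_upwards [Filter.eventually_gt_atTop 0] with R hR
    exact cover_le hα₀ x₀ hr hR
  have hPn : ∀ᶠ R in Filter.atTop, (P R : ℕ∞) ≤ n R := by
    filter_upwards [Filter.eventually_ge_atTop 4,
      Filter.eventually_ge_atTop (4*(|b₀|+|b₁|+1))] with R h1 h2
    exact le_cover hα₀ hα₁ x₀ hr h1 h2
  set u : ℝ → ℝ := fun R => (Real.log R)⁻¹ * Real.log ((n R).toNat) with hu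
  have hFu : ∀ᶠ R in Filter.atTop,
      ((Real.log R)⁻¹ : EReal) * elog (coverNum r (Metric.ball x₀ R)) = ((u R : ℝ) : EReal) := by
    filter_upwards [hnN] with R h
    have hne : n R ≠ ⊤ := fun ht => by simp [ht] at h
    rw [show coverNum r (Metric.ball x₀ R) = n R from rfl, elog_ne_top hne]
    exact (EReal.coe_mul _ _).symm
  -- upper estimate
  have hub : ∀ᶠ R in Filter.atTop, u R ≤ (Real.log R)⁻¹ * Real.log C + (α+1) := by
    filter_upwards [hnN, Filter.eventually_ge_atTop 2, Filter.eventually_ge_atTop b₀]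
      with R hNle hR2 hRb
    have hR1 : (1:ℝ) ≤ R := by linarith
    have hR0 : (0:ℝ) < R := by linarith
    have hlogpos : 0 < Real.log R := Real.log_pos (by linarith)
    have hRα1 : (1:ℝ) ≤ R^α := Real.one_le_rpow hR1 hα₀.le
    have hRα0 : (0:ℝ) < R^α := by positivity
    have hA1 : ((⌈(b₀+R)/(r/4)⌉₊:ℝ)+1) ≤ (2/(r/4)+2) * R := by
      have h1 : ((⌈(b₀+R)/(r/4)⌉₊:ℝ)) < (b₀+R)/(r/4) + 1 := Nat.ceil_lt_add_one (by positivity)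
      have h2 : (b₀+R)/(r/4) ≤ (2*R)/(r/4) := by gcongr <;> linarith
      have h3 : (2*R)/(r/4) = (2/(r/4))*R := by ring
      nlinarith
    have hpow : (b₀+R)^α ≤ 2*R^α := by
      calc (b₀+R)^α ≤ (2*R)^α := Real.rpow_le_rpow (by linarith) (by linarith) hα₀.le
        _ = (2:ℝ)^(α:ℝ) * R^α := Real.mul_rpow (by norm_num) hR0.le
        _ ≤ 2 * R^α := by
            have h4 : (2:ℝ)^(α:ℝ) ≤ (2:ℝ)^(1:ℝ) :=
              Real.rpow_le_rpow_of_exponent_le one_le_two hα₁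
            rw [Real.rpow_one] at h4
            nlinarith
    have hA2 : (2*(⌈(b₀+R)^α/(r/4)⌉₊:ℝ)+1) ≤ (4/(r/4)+3) * R^α := by
      have h1 : ((⌈(b₀+R)^α/(r/4)⌉₊:ℝ)) < (b₀+R)^α/(r/4) + 1 := by
        apply Nat.ceil_lt_add_one
        positivity
      have h2 : (b₀+R)^α/(r/4) ≤ (2*R^α)/(r/4) := by gcongr
      calc 2*(⌈(b₀+R)^α/(r/4)⌉₊:ℝ)+1 ≤ 2*((b₀+R)^α/(r/4)) + 3 := by linarith
        _ ≤ 2*((2*R^α)/(r/4)) + 3 := by linarith [h2]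
        _ = (4/(r/4))*R^α + 3 := by ring
        _ ≤ (4/(r/4))*R^α + 3*R^α := by linarith [hRα1]
        _ = (4/(r/4)+3)*R^α := by ring
    have hNC : (N R : ℝ) ≤ C * R^(α+1) := by
      have e1 : (N R : ℝ) = ((⌈(b₀+R)/(r/4)⌉₊:ℝ)+1) * (2*(⌈(b₀+R)^α/(r/4)⌉₊:ℝ)+1) := by
        rw [hN]; push_cast; ring
      rw [e1]
      calc ((⌈(b₀+R)/(r/4)⌉₊:ℝ)+1) * (2*(⌈(b₀+R)^α/(r/4)⌉₊:ℝ)+1)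
          ≤ ((2/(r/4)+2)*R) * ((4/(r/4)+3)*R^α) := by
            apply mul_le_mul hA1 hA2 (by positivity) (by positivity)
        _ = C * (R^α * R) := by rw [hC]; ring
        _ = C * R^(α+1) := by rw [Real.rpow_add_one hR0.ne']
    have htn : (((n R).toNat:ℕ):ℝ) ≤ C * R^(α+1) := by
      have h5 : (n R).toNat ≤ N R := ENat.toNat_le_of_le_coe hNle
      calc (((n R).toNat:ℕ):ℝ) ≤ (N R : ℝ) := by exact_mod_cast h5
        _ ≤ _ := hNC
    have hCR1 : (1:ℝ) ≤ C * R^(α+1) := by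
      have h6 : (1:ℝ) ≤ R^(α+1) := Real.one_le_rpow hR1 (by linarith)
      nlinarith
    have hlogn : Real.log ((n R).toNat) ≤ Real.log C + (α+1)*Real.log R := by
      have h7 := log_nat_le htn hCR1
      rwa [Real.log_mul hC0.ne' (by positivity : R^(α+1) ≠ 0), Real.log_rpow hR0] at h7
    calc u R ≤ (Real.log R)⁻¹ * (Real.log C + (α+1)*Real.log R) :=
          mul_le_mul_of_nonneg_left hlogn (inv_nonneg.mpr hlogpos.le)
      _ = (Real.log R)⁻¹ * Real.log C + (α+1) := by
          field_simp
  -- lower estimate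
  have hlb : ∀ᶠ R in Filter.atTop, (Real.log R)⁻¹ * Real.log c + (α+1) ≤ u R := by
    filter_upwards [hPn, hnN, Filter.eventually_ge_atTop 2, Filter.eventually_ge_atTop (16*r)]
      with R hPle hNle hR2 hRr
    have hR0 : (0:ℝ) < R := by linarith
    have hne : n R ≠ ⊤ := fun ht => by simp [ht] at hNle
    have hlogpos : 0 < Real.log R := Real.log_pos (by linarith)
    have hI' : R/(16*r) ≤ (⌊R/(8*r)⌋₊:ℝ) := by
      have h1 : R/(8*r) - 1 < (⌊R/(8*r)⌋₊:ℝ) := Nat.sub_one_lt_floor _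
      have h2 : (1:ℝ) ≤ R/(16*r) := by rw [le_div_iff₀ (by positivity)]; linarith
      have e : R/(8*r) = 2*(R/(16*r)) := by ring
      linarith
    have hJ' : (R/4)^α/(2*r) ≤ (⌊(R/4)^α/(2*r)⌋₊:ℝ) + 1 := (Nat.lt_floor_add_one _).le
    have hPge : c * R^(α+1) ≤ (P R : ℝ) := by
      have e1 : (P R : ℝ) = (⌊R/(8*r)⌋₊:ℝ) * ((⌊(R/4)^α/(2*r)⌋₊:ℝ)+1) := by
        rw [hP]; push_cast; ring
      have h3 : (R/(16*r)) * ((R/4)^α/(2*r)) ≤ (⌊R/(8*r)⌋₊:ℝ) * ((⌊(R/4)^α/(2*r)⌋₊:ℝ)+1) :=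
        mul_le_mul hI' hJ' (by positivity) (by positivity)
      have e2 : (R/(16*r)) * ((R/4)^α/(2*r)) = c * R^(α+1) := by
        have e3 : (R/4)^α = R^α/(4:ℝ)^(α:ℝ) := Real.div_rpow hR0.le (by norm_num : (0:ℝ) ≤ 4) α
        rw [e3, hc, Real.rpow_add_one hR0.ne']
        field_simp
        ring
      rw [e1, ← e2]; exact h3
    have htn : c * R^(α+1) ≤ (((n R).toNat:ℕ):ℝ) := by
      have h5 : P R ≤ (n R).toNat := by
        have h6 := ENat.toNat_le_toNat hPle hne
        simpa using h6
      calc c * R^(α+1) ≤ (P R : ℝ) := hPge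
        _ ≤ (((n R).toNat:ℕ):ℝ) := by exact_mod_cast h5
    have hlogn : Real.log c + (α+1)*Real.log R ≤ Real.log ((n R).toNat) := by
      have h7 : Real.log (c * R^(α+1)) ≤ Real.log ((n R).toNat) :=
        Real.log_le_log (by positivity) htn
      rwa [Real.log_mul hc0.ne' (by positivity : R^(α+1) ≠ 0), Real.log_rpow hR0] at h7
    calc (Real.log R)⁻¹ * Real.log c + (α+1)
        = (Real.log R)⁻¹ * (Real.log c + (α+1)*Real.log R) := by field_simp
      _ ≤ u R := mul_le_mul_of_nonneg_left hlogn (inv_nonneg.mpr hlogpos.le)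
  -- conclusion
  have hgE : Filter.Tendsto (fun R : ℝ => (((Real.log R)⁻¹ * Real.log C + (α+1) : ℝ) : EReal))
      Filter.atTop (𝓝 ((α+1 : ℝ) : EReal)) := by
    apply EReal.tendsto_coe.mpr
    have h0 : Filter.Tendsto (fun R : ℝ => (Real.log R)⁻¹) Filter.atTop (𝓝 0) :=
      Real.tendsto_log_atTop.inv_tendsto_atTop
    simpa using (h0.mul_const (Real.log C)).add_const (α+1)
  have hhE : Filter.Tendsto (fun R : ℝ => (((Real.log R)⁻¹ * Real.log c + (α+1) : ℝ) : EReal))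
      Filter.atTop (𝓝 ((α+1 : ℝ) : EReal)) := by
    apply EReal.tendsto_coe.mpr
    have h0 : Filter.Tendsto (fun R : ℝ => (Real.log R)⁻¹) Filter.atTop (𝓝 0) :=
      Real.tendsto_log_atTop.inv_tendsto_atTop
    simpa using (h0.mul_const (Real.log c)).add_const (α+1)
  have h1 : Filter.limsup
      (fun R : ℝ => ((Real.log R)⁻¹ : EReal) * elog (coverNum r (Metric.ball x₀ R)))
      Filter.atTop = Filter.limsup (fun R : ℝ => ((u R : ℝ) : EReal)) Filter.atTop :=
    Filter.limsup_congr hFu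
  rw [h1]
  apply le_antisymm
  · calc Filter.limsup (fun R : ℝ => ((u R : ℝ) : EReal)) Filter.atTop
        ≤ Filter.limsup (fun R : ℝ => (((Real.log R)⁻¹ * Real.log C + (α+1) : ℝ) : EReal))
          Filter.atTop :=
          Filter.limsup_le_limsup (hub.mono fun R h => EReal.coe_le_coe_iff.mpr h)
      _ = ((α+1 : ℝ) : EReal) := hgE.limsup_eq
  · calc ((α+1 : ℝ) : EReal)
        = Filter.liminf (fun R : ℝ => (((Real.log R)⁻¹ * Real.log c + (α+1) : ℝ) : EReal))
          Filter.atTop := hhE.liminf_eq.symm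
      _ ≤ Filter.liminf (fun R : ℝ => ((u R : ℝ) : EReal)) Filter.atTop :=
          Filter.liminf_le_liminf (hlb.mono fun R h => EReal.coe_le_coe_iff.mpr h)
      _ ≤ Filter.limsup (fun R : ℝ => ((u R : ℝ) : EReal)) Filter.atTop :=
          Filter.liminf_le_limsup

end Stmt18

namespace Stmt18

lemma asympDim_eq {α : ℝ} (hα₀ : 0 < α) (hα₁ : α ≤ 1) (x₀ : ↥(S α)) :
    asympDim x₀ = ((α + 1 : ℝ) : EReal) := by
  rw [asympDim]
  apply le_antisymm
  · exact iInf₂_le_of_le 1 one_pos (limsup_main hα₀ hα₁ x₀ one_pos).le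
  · exact le_iInf₂ fun r hr => (limsup_main hα₀ hα₁ x₀ hr).ge

end Stmt18

/-- Example 1.2.17: the region `X = {(x,y) ∈ ℝ² : x ≥ 0, |y| ≤ x^α}` with the Euclidean
metric has asymptotic dimension `α + 1`, for `α ∈ (0,1]`. -/
theorem stmt18 (α : ℝ) (hα₀ : 0 < α) (hα₁ : α ≤ 1) :
    asympDimSpace
      ↥{p : EuclideanSpace ℝ (Fin 2) | 0 ≤ p 0 ∧ |p 1| ≤ (p 0) ^ α} =
    ((α + 1 : ℝ) : EReal) := by
  have hne : Nonempty ↥{p : EuclideanSpace ℝ (Fin 2) | 0 ≤ p 0 ∧ |p 1| ≤ (p 0) ^ α} := by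
    refine ⟨⟨Stmt18.pt 0 0, le_of_eq (Stmt18.pt_zero 0 0).symm, ?_⟩⟩
    show |Stmt18.pt 0 0 1| ≤ (Stmt18.pt 0 0 0) ^ α
    rw [Stmt18.pt_zero, Stmt18.pt_one, Real.zero_rpow hα₀.ne', abs_zero]
  have h : ∀ x : ↥{p : EuclideanSpace ℝ (Fin 2) | 0 ≤ p 0 ∧ |p 1| ≤ (p 0) ^ α},
      asympDim x = ((α + 1 : ℝ) : EReal) := fun x => Stmt18.asympDim_eq hα₀ hα₁ x
  calc asympDimSpace ↥{p : EuclideanSpace ℝ (Fin 2) | 0 ≤ p 0 ∧ |p 1| ≤ (p 0) ^ α}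
      = ⨆ x : ↥{p : EuclideanSpace ℝ (Fin 2) | 0 ≤ p 0 ∧ |p 1| ≤ (p 0) ^ α},
        ((α + 1 : ℝ) : EReal) := by rw [asympDimSpace]; exact iSup_congr h
    _ = ((α + 1 : ℝ) : EReal) := iSup_const
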